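/- arXiv:0910.4886 — 2 statements merged into one kernel-verified Lean document; each statement's English description precedes it below -/
import Mathlib

section
/- Let Γ be a finite connected simplicial graph with no SIL, and let v, w be distinct non-adjacent vertices of Γ. Let C₀ be the connected component of Γ∖st(v) containing w, and let D₀ be the connected component of Γ∖st(w) containing v. Then every connected component of Γ∖st(v) other than C₀ is entirely contained in D₀, and every connected component of Γ∖st(w) other than D₀ is entirely contained in C₀. -/
open Monoid

namespace ArXiv

universe u uG

variable {V : Type u}

/-- The star of a vertex: the vertex together with its neighbors. -/
def star (Γ : SimpleGraph V) (v : V) : Set V := insert v (Γ.neighborSet v)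

/-- `C ⊆ V` is the vertex set of a connected component of the full subgraph of `Γ`
induced on `S`. -/
def IsCompOf (Γ : SimpleGraph V) (S : Set V) (C : Set V) : Prop :=
  ∃ c : (Γ.induce S).ConnectedComponent, C = Subtype.val '' c.supp

/-- `Γ` has a separating intersection of links: there are distinct non-adjacent vertices
`v, w` such that some connected component of `Γ ∖ (lk(v) ∩ lk(w))` contains neither `v`
nor `w`. -/
def HasSIL (Γ : SimpleGraph V) : Prop :=
  ∃ v w : V, v ≠ w ∧ ¬ Γ.Adj v w ∧
    ∃ C : Set V, IsCompOf Γ ((Γ.neighborSet v ∩ Γ.neighborSet w)ᶜ) C ∧ v ∉ C ∧ w ∉ C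

variable (Γ : SimpleGraph V) (G : V → Type uG) [∀ v, Group (G v)]

/-- The commutator relators defining the graph product. -/
def rels : Set (Monoid.CoprodI G) :=
  {x | ∃ (v w : V) (_ : Γ.Adj v w) (g : G v) (h : G w),
    x = CoprodI.of g * CoprodI.of h * (CoprodI.of g)⁻¹ * (CoprodI.of h)⁻¹}

/-- The graph product of the vertex groups `G v` over the graph `Γ`: the quotient of the
free product by the normal closure of the commutators of adjacent vertex groups. -/
def GraphProduct : Type (max u uG) :=
  Monoid.CoprodI G ⧸ Subgroup.normalClosure (rels Γ G)

instance : Group (GraphProduct Γ G) :=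
  inferInstanceAs (Group (Monoid.CoprodI G ⧸ Subgroup.normalClosure (rels Γ G)))

/-- The canonical map from a vertex group into the graph product. -/
def of {v : V} : G v →* GraphProduct Γ G :=
  (QuotientGroup.mk' (Subgroup.normalClosure (rels Γ G))).comp CoprodI.of

theorem of_commute {v w : V} (h : Γ.Adj v w) (g : G v) (k : G w) :
    Commute (of Γ G g) (of Γ G k) := by
  rw [← commutatorElement_eq_one_iff_commute]
  have hmem : (CoprodI.of g * CoprodI.of k * (CoprodI.of g)⁻¹ * (CoprodI.of k)⁻¹ :
      Monoid.CoprodI G) ∈ Subgroup.normalClosure (rels Γ G) :=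
    Subgroup.subset_normalClosure ⟨v, w, h, g, k, rfl⟩
  have h1 : (QuotientGroup.mk' (Subgroup.normalClosure (rels Γ G)))
      (CoprodI.of g * CoprodI.of k * (CoprodI.of g)⁻¹ * (CoprodI.of k)⁻¹) = 1 :=
    (QuotientGroup.eq_one_iff _).mpr hmem
  simp only [map_mul, map_inv] at h1
  rw [commutatorElement_def]
  exact h1

/-- `π` is the partial conjugation `π_{v,C}`, for vertex groups with chosen generators
`gen`: it conjugates the generators in `C` by (the generator of) `v` and fixes all other
generators. -/
def IsPartialConj (gen : ∀ v, G v) (π : MulAut (GraphProduct Γ G)) (v : V) (C : Set V) :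
    Prop :=
  (∀ u ∈ C, ∀ g : G u, π (of Γ G g) = of Γ G (gen v) * of Γ G g * (of Γ G (gen v))⁻¹) ∧
  (∀ u ∉ C, ∀ g : G u, π (of Γ G g) = of Γ G g)

/-- `π` is the partial conjugation `π_{a,C}` by the element `a` of the vertex group `G v`:
it conjugates the vertex groups in `C` by `a` and fixes all other vertex groups. -/
def IsPartialConjBy {v : V} (a : G v) (π : MulAut (GraphProduct Γ G)) (C : Set V) : Prop :=
  (∀ u ∈ C, ∀ g : G u, π (of Γ G g) = of Γ G a * of Γ G g * (of Γ G a)⁻¹) ∧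
  (∀ u ∉ C, ∀ g : G u, π (of Γ G g) = of Γ G g)

/-- The vertex set of the graph `Γ̃`: pairs `p_{v,C}` where `C` is a connected component
of `Γ ∖ st(v)`. -/
def TV : Type u := {p : V × Set V // IsCompOf Γ ((star Γ p.1)ᶜ) p.2}

/-- The graph `Γ̃`: vertices `p_{v,C}` and `p_{w,D}` are joined by an edge unless
`v, w` are distinct non-adjacent vertices with `v ∈ D` and `w ∈ C`. -/
def tilde : SimpleGraph (TV Γ) where
  Adj p q := p ≠ q ∧
    ¬(p.1.1 ≠ q.1.1 ∧ ¬ Γ.Adj p.1.1 q.1.1 ∧ p.1.1 ∈ q.1.2 ∧ q.1.1 ∈ p.1.2)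
  symm := ⟨by
    rintro p q ⟨h1, h2⟩
    exact ⟨h1.symm, fun ⟨a, b, c, d⟩ => h2 ⟨a.symm, fun e => b e.symm, d, c⟩⟩⟩
  loopless := ⟨fun p h => h.1 rfl⟩

/-- The graph product `G_{Γ̃}`, where the vertex `p_{v,C}` is labeled by (a copy of) the
group `G v`. -/
abbrev TildeProduct : Type (max u uG) :=
  GraphProduct (tilde Γ) (fun p : TV Γ => G p.1.1)

/-- The element `p_v = ∏_C p_{v,C} ∈ G_{Γ̃}`, the product over all connected components
`C` of `Γ ∖ st(v)` (the factors pairwise commute). -/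
noncomputable def pvert [Finite V] (gen : ∀ v, G v) (v : V) : TildeProduct Γ G :=
  haveI : Fintype {C : Set V // IsCompOf Γ ((star Γ v)ᶜ) C} := Fintype.ofFinite _
  Finset.noncommProd (Finset.univ : Finset {C : Set V // IsCompOf Γ ((star Γ v)ᶜ) C})
    (fun c => of (tilde Γ) (fun p : TV Γ => G p.1.1) (v := ⟨(v, c.1), c.2⟩) (gen v))
    (by
      intro a _ b _ hab
      have hadj : (tilde Γ).Adj ⟨(v, a.1), a.2⟩ ⟨(v, b.1), b.2⟩ := by
        show _ ≠ _ ∧ _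
        refine ⟨fun h => hab (Subtype.ext (congrArg (fun x : TV Γ => x.1.2) h)), ?_⟩
        rintro ⟨hne, -⟩
        exact hne rfl
      exact of_commute (tilde Γ) (fun p : TV Γ => G p.1.1) hadj (gen v) (gen v))

/-- The set `Δ` of vertices adjacent to every other vertex of `Γ`. -/
def Delta (Γ : SimpleGraph V) : Set V := {v | ∀ u, u ≠ v → Γ.Adj v u}

/-- The subgroup of the graph product generated by the vertex groups `G v`, `v ∈ T`. -/
def vertexSubgroup (T : Set V) : Subgroup (GraphProduct Γ G) :=
  Subgroup.closure {x | ∃ v ∈ T, ∃ g : G v, x = of Γ G g}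

/-- `w` is a reduced word for the element `g` of the graph product: a minimal length
expression of `g` as a product of nontrivial elements of vertex groups. -/
def IsReducedWord (g : GraphProduct Γ G) (w : List (Σ v : V, G v)) : Prop :=
  (w.map fun l => of Γ G l.2).prod = g ∧ (∀ l ∈ w, l.2 ≠ 1) ∧
    ∀ w' : List (Σ v : V, G v), (w'.map fun l => of Γ G l.2).prod = g →
      w.length ≤ w'.length

private def Step (Γ : SimpleGraph V) (S : Set V) (a b : V) : Prop :=
  a ∈ S ∧ b ∈ S ∧ Γ.Adj a b

private lemma step_symm {Γ : SimpleGraph V} {S : Set V} {a b : V}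
    (h : Relation.ReflTransGen (Step Γ S) a b) : Relation.ReflTransGen (Step Γ S) b a := by
  induction h with
  | refl => exact .refl
  | tail _ hbc ih => exact .trans (.single ⟨hbc.2.1, hbc.1, hbc.2.2.symm⟩) ih

private lemma step_mono {Γ : SimpleGraph V} {S T : Set V} (hST : S ⊆ T) {a b : V}
    (h : Relation.ReflTransGen (Step Γ S) a b) :
    Relation.ReflTransGen (Step Γ T) a b :=
  Relation.ReflTransGen.mono (p := Step Γ T) (fun _ _ h => ⟨hST h.1, hST h.2.1, h.2.2⟩) _ _ h

private lemma rtg_mem {Γ : SimpleGraph V} {S : Set V} {a b : V} (ha : a ∈ S)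
    (h : Relation.ReflTransGen (Step Γ S) a b) : b ∈ S := by
  induction h with
  | refl => exact ha
  | tail _ hbc _ => exact hbc.2.1

private lemma reachable_iff {Γ : SimpleGraph V} {S : Set V} {a b : V} (ha : a ∈ S) (hb : b ∈ S) :
    (Γ.induce S).Reachable ⟨a, ha⟩ ⟨b, hb⟩ ↔ Relation.ReflTransGen (Step Γ S) a b := by
  constructor
  · intro h
    obtain ⟨p⟩ := h
    have key : ∀ (x y : S) (_ : (Γ.induce S).Walk x y),
        Relation.ReflTransGen (Step Γ S) x.1 y.1 := by
      intro x y p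
      induction p with
      | nil => exact .refl
      | @cons x y z h p ih => exact .head ⟨x.2, y.2, h⟩ ih
    exact key _ _ p
  · intro h
    have key : ∀ b, Relation.ReflTransGen (Step Γ S) a b →
        ∀ hb : b ∈ S, (Γ.induce S).Reachable ⟨a, ha⟩ ⟨b, hb⟩ := by
      intro b h
      induction h with
      | refl => exact fun _ => SimpleGraph.Reachable.refl _
      | @tail x y hax hxy ih =>
        intro hy
        exact (ih hxy.1).trans (SimpleGraph.Adj.reachable (by exact hxy.2.2))
    exact key b h hb

private lemma comp_eq {Γ : SimpleGraph V} {S C : Set V} (h : IsCompOf Γ S C) {u : V}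
    (hu : u ∈ C) :
    u ∈ S ∧ C = {b | Relation.ReflTransGen (Step Γ S) u b} := by
  obtain ⟨c, rfl⟩ := h
  obtain ⟨⟨u, huS⟩, hmem, rfl⟩ := hu
  rw [SimpleGraph.ConnectedComponent.mem_supp_iff] at hmem
  refine ⟨huS, Set.ext fun b => ?_⟩
  constructor
  · rintro ⟨⟨b, hbS⟩, hbm, rfl⟩
    rw [SimpleGraph.ConnectedComponent.mem_supp_iff, ← hmem,
      SimpleGraph.ConnectedComponent.eq] at hbm
    exact (reachable_iff huS hbS).mp hbm.symm
  · intro hb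
    have hbS : b ∈ S := rtg_mem huS hb
    refine ⟨⟨b, hbS⟩, ?_, rfl⟩
    rw [SimpleGraph.ConnectedComponent.mem_supp_iff, ← hmem, SimpleGraph.ConnectedComponent.eq]
    exact ((reachable_iff huS hbS).mpr hb).symm


private lemma mem_star_iff {Γ : SimpleGraph V} {v x : V} :
    x ∈ star Γ v ↔ x = v ∨ Γ.Adj v x := by
  simp [star, SimpleGraph.mem_neighborSet]

private lemma nest_half (Γ : SimpleGraph V)
    (hsil : ¬ HasSIL Γ) (v w : V) (hvw : v ≠ w) (hadj : ¬ Γ.Adj v w)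
    (C₀ D₀ : Set V) (hC₀ : IsCompOf Γ ((star Γ v)ᶜ) C₀) (hwC₀ : w ∈ C₀)
    (hD₀ : IsCompOf Γ ((star Γ w)ᶜ) D₀) (hvD₀ : v ∈ D₀)
    (C : Set V) (hC : IsCompOf Γ ((star Γ v)ᶜ) C) (hCne : C ≠ C₀) :
    C ⊆ D₀ := by
  intro u hu
  obtain ⟨huSv, hCeq⟩ := comp_eq hC hu
  obtain ⟨hwSv, hC₀eq⟩ := comp_eq hC₀ hwC₀
  obtain ⟨hvSw, hD₀eq⟩ := comp_eq hD₀ hvD₀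
  -- u ∉ C₀
  have huC₀ : u ∉ C₀ := by
    intro huC₀
    obtain ⟨_, hC₀eq'⟩ := comp_eq hC₀ huC₀
    exact hCne (hCeq.trans hC₀eq'.symm)
  -- u ∉ star Γ w
  have huSw : u ∉ star Γ w := by
    rw [mem_star_iff]
    rintro (rfl | hwu)
    · exact huC₀ hwC₀
    · refine huC₀ ?_
      rw [hC₀eq]
      exact .single ⟨hwSv, huSv, hwu⟩
  -- translate membership goals
  have huC₀' : ¬ Relation.ReflTransGen (Step Γ ((star Γ v)ᶜ)) w u := by
    rw [hC₀eq] at huC₀; exact huC₀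
  rw [hD₀eq]
  by_contra huD₀
  -- the intersection-of-links complement
  set S' : Set V := (Γ.neighborSet v ∩ Γ.neighborSet w)ᶜ with hS'
  have hSvS' : (star Γ v)ᶜ ⊆ S' := by
    intro x hx hmem
    exact hx (mem_star_iff.mpr (Or.inr hmem.1))
  have hSwS' : (star Γ w)ᶜ ⊆ S' := by
    intro x hx hmem
    exact hx (mem_star_iff.mpr (Or.inr hmem.2))
  have hvSw' : v ∉ star Γ w := hvSw
  have huS' : u ∈ S' := hSvS' huSv
  -- the key invariant
  have inv : ∀ x, Relation.ReflTransGen (Step Γ S') u x →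
      x ∉ star Γ v ∧ x ∉ star Γ w ∧
        Relation.ReflTransGen (Step Γ ((star Γ v ∪ star Γ w)ᶜ)) u x := by
    intro x h
    induction h with
    | refl => exact ⟨huSv, huSw, .refl⟩
    | @tail x y hux hxy ih =>
      obtain ⟨ihv, ihw, ihchain⟩ := ih
      have hyne_v : y ≠ v := by
        rintro rfl
        exact ihv (mem_star_iff.mpr (Or.inr hxy.2.2.symm))
      have hyne_w : y ≠ w := by
        rintro rfl
        exact ihw (mem_star_iff.mpr (Or.inr hxy.2.2.symm))
      by_cases hylv : y ∈ Γ.neighborSet v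
      · -- y ∈ lk v \ lk w : contradiction with u ∉ D₀
        have hylw : y ∉ Γ.neighborSet w := fun hylw => hxy.2.1 ⟨hylv, hylw⟩
        have hySw : y ∉ star Γ w := by
          rw [mem_star_iff]; rintro (rfl | h); exact hyne_w rfl; exact hylw h
        have hxSw : x ∉ star Γ w := ihw
        refine absurd ?_ huD₀
        have h1 : Relation.ReflTransGen (Step Γ ((star Γ w)ᶜ)) v y :=
          .single ⟨hvSw, hySw, hylv⟩
        have h2 : Relation.ReflTransGen (Step Γ ((star Γ w)ᶜ)) y x :=
          .single ⟨hySw, hxSw, hxy.2.2.symm⟩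
        have h3 : Relation.ReflTransGen (Step Γ ((star Γ w)ᶜ)) x u :=
          step_symm (step_mono (Set.compl_subset_compl.mpr Set.subset_union_right) ihchain)
        exact (h1.trans h2).trans h3
      · by_cases hylw : y ∈ Γ.neighborSet w
        · -- y ∈ lk w \ lk v : contradiction with u ∉ C₀
          have hySv : y ∉ star Γ v := by
            rw [mem_star_iff]; rintro (rfl | h); exact hyne_v rfl; exact hylv h
          have hwSv : w ∉ star Γ v := by
            rw [mem_star_iff]; rintro (rfl | h); exact hvw rfl; exact hadj h
          refine absurd ?_ huC₀'
          have h1 : Relation.ReflTransGen (Step Γ ((star Γ v)ᶜ)) w y :=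
            .single ⟨hwSv, hySv, hylw⟩
          have h2 : Relation.ReflTransGen (Step Γ ((star Γ v)ᶜ)) y x :=
            .single ⟨hySv, ihv, hxy.2.2.symm⟩
          have h3 : Relation.ReflTransGen (Step Γ ((star Γ v)ᶜ)) x u :=
            step_symm (step_mono (Set.compl_subset_compl.mpr Set.subset_union_left) ihchain)
          exact (h1.trans h2).trans h3
        · -- y avoids both stars
          have hySv : y ∉ star Γ v := by
            rw [mem_star_iff]; rintro (rfl | h); exact hyne_v rfl; exact hylv h
          have hySw : y ∉ star Γ w := by
            rw [mem_star_iff]; rintro (rfl | h); exact hyne_w rfl; exact hylw h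
          refine ⟨hySv, hySw, ihchain.tail ⟨?_, ?_, hxy.2.2⟩⟩
          · rintro (h | h); exact ihv h; exact ihw h
          · rintro (h | h); exact hySv h; exact hySw h
  -- build the SIL witness
  refine hsil ⟨v, w, hvw, hadj, Subtype.val '' ((Γ.induce S').connectedComponentMk ⟨u, huS'⟩).supp,
    ⟨_, rfl⟩, ?_, ?_⟩
  · rintro ⟨⟨x, hxS'⟩, hxm, hxv⟩
    rw [SimpleGraph.ConnectedComponent.mem_supp_iff, SimpleGraph.ConnectedComponent.eq] at hxm
    exact (inv x ((reachable_iff huS' hxS').mp hxm.symm)).1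
      (mem_star_iff.mpr (Or.inl hxv))
  · rintro ⟨⟨x, hxS'⟩, hxm, hxw⟩
    rw [SimpleGraph.ConnectedComponent.mem_supp_iff, SimpleGraph.ConnectedComponent.eq] at hxm
    exact (inv x ((reachable_iff huS' hxS').mp hxm.symm)).2.1
      (mem_star_iff.mpr (Or.inl hxw))


/-- (Lemma: components nest) If `Γ` is a finite connected graph with no
SIL, `v, w` distinct non-adjacent vertices, `C₀` the component of `Γ ∖ st(v)` containing
`w` and `D₀` the component of `Γ ∖ st(w)` containing `v`, then every component of
`Γ ∖ st(v)` other than `C₀` lies in `D₀`, and symmetrically. -/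
theorem components_nest {V : Type u} [Finite V] (Γ : SimpleGraph V)
    (hconn : Γ.Connected) (hsil : ¬ HasSIL Γ)
    (v w : V) (hvw : v ≠ w) (hadj : ¬ Γ.Adj v w)
    (C₀ D₀ : Set V)
    (hC₀ : IsCompOf Γ ((star Γ v)ᶜ) C₀) (hwC₀ : w ∈ C₀)
    (hD₀ : IsCompOf Γ ((star Γ w)ᶜ) D₀) (hvD₀ : v ∈ D₀) :
    (∀ C : Set V, IsCompOf Γ ((star Γ v)ᶜ) C → C ≠ C₀ → C ⊆ D₀) ∧
    (∀ D : Set V, IsCompOf Γ ((star Γ w)ᶜ) D → D ≠ D₀ → D ⊆ C₀) := by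
  exact ⟨fun C hC hne => nest_half Γ hsil v w hvw hadj C₀ D₀ hC₀ hwC₀ hD₀ hvD₀ C hC hne,
    fun D hD hne => nest_half Γ hsil w v hvw.symm (fun h => hadj h.symm) D₀ C₀ hD₀ hvD₀
      hC₀ hwC₀ D hD hne⟩

end ArXiv
end

section
/- Let Γ be a finite connected simplicial graph with no SIL whose vertices are labeled by nontrivial cyclic groups. Then the quotient group Q = G_{Γ̃}/f̃(G_{Γ₀}) is abelian. -/
open Monoid

namespace ArXiv

universe u uG

variable {V : Type u}

variable (Γ : SimpleGraph V) (G : V → Type uG) [∀ v, Group (G v)]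

theorem IsCompOf.eq_of_mem {Γ : SimpleGraph V} {S C D : Set V} (hC : IsCompOf Γ S C)
    (hD : IsCompOf Γ S D) {x : V} (hxC : x ∈ C) (hxD : x ∈ D) : C = D := by
  obtain ⟨c, rfl⟩ := hC
  obtain ⟨d, rfl⟩ := hD
  obtain ⟨a, ha, rfl⟩ := hxC
  obtain ⟨b, hb, hba⟩ := hxD
  obtain rfl : b = a := Subtype.ext hba
  rw [SimpleGraph.ConnectedComponent.mem_supp_iff] at ha hb
  rw [← ha, ← hb]

theorem closure_of_eq_top :
    Subgroup.closure {x : GraphProduct Γ G | ∃ (v : V) (g : G v), x = of Γ G g} = ⊤ := by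
  rw [eq_top_iff]
  rintro x -
  obtain ⟨y, rfl⟩ := QuotientGroup.mk'_surjective (Subgroup.normalClosure (rels Γ G)) x
  induction y using Monoid.CoprodI.induction_on with
  | one => exact (map_one (QuotientGroup.mk' (Subgroup.normalClosure (rels Γ G)))) ▸
      Subgroup.one_mem _
  | of i m => exact Subgroup.subset_closure ⟨i, m, rfl⟩
  | mul a b ha hb => exact (map_mul (QuotientGroup.mk' (Subgroup.normalClosure (rels Γ G)))
      a b) ▸ Subgroup.mul_mem _ ha hb

/-- The quotient group `Q = G_{Γ̃} / f̃(G_{Γ₀})` is abelian. -/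
theorem Q_abelian {V : Type u} [Finite V] (Γ : SimpleGraph V)
    (hconn : Γ.Connected) (hsil : ¬ HasSIL Γ)
    (G : V → Type uG) [∀ v, Group (G v)] [∀ v, Nontrivial (G v)]
    (gen : ∀ v, G v) (hgen : ∀ v, Subgroup.zpowers (gen v) = ⊤)
    (f : GraphProduct (Γ.induce (Delta Γ)ᶜ) (fun u : ↥(Delta Γ)ᶜ => G u.1) →*
      TildeProduct Γ G)
    (hf : ∀ u : ↥(Delta Γ)ᶜ,
      f (of (Γ.induce (Delta Γ)ᶜ) (fun x : ↥(Delta Γ)ᶜ => G x.1) (v := u) (gen u.1)) =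
        pvert Γ G gen u.1)
    [hN : f.range.Normal] :
    ∀ a b : TildeProduct Γ G ⧸ f.range, a * b = b * a := by
  classical
  set φ : TildeProduct Γ G →* TildeProduct Γ G ⧸ f.range := QuotientGroup.mk' f.range with hφ
  -- Step 1: the images of the vertex generators pairwise commute in the quotient.
  have key : ∀ p q : TV Γ,
      Commute (φ (of (tilde Γ) (fun r : TV Γ => G r.1.1) (v := p) (gen p.1.1)))
        (φ (of (tilde Γ) (fun r : TV Γ => G r.1.1) (v := q) (gen q.1.1))) := by
    intro p q
    by_cases hpq : p = q
    · subst hpq; exact Commute.refl _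
    by_cases hbad : p.1.1 ≠ q.1.1 ∧ ¬ Γ.Adj p.1.1 q.1.1 ∧ p.1.1 ∈ q.1.2 ∧ q.1.1 ∈ p.1.2
    · obtain ⟨⟨v, C⟩, hp⟩ := p
      obtain ⟨⟨w, D⟩, hq⟩ := q
      obtain ⟨hne, hnadj, hvD, hwC⟩ := hbad
      have hvΔ : v ∈ (Delta Γ)ᶜ := fun hΔ => hnadj (hΔ w (Ne.symm hne))
      -- the image of `p_v` is trivial in the quotient
      have hp1 : φ (pvert Γ G gen v) = 1 := by
        rw [← hf ⟨v, hvΔ⟩]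
        exact (QuotientGroup.eq_one_iff _).mpr ⟨_, rfl⟩
      letI inst : Fintype {C : Set V // IsCompOf Γ ((star Γ v)ᶜ) C} := Fintype.ofFinite _
      set x : {C : Set V // IsCompOf Γ ((star Γ v)ᶜ) C} → TildeProduct Γ G :=
        fun c => of (tilde Γ) (fun r : TV Γ => G r.1.1) (v := ⟨(v, c.1), c.2⟩) (gen v) with hx
      set y : TildeProduct Γ G :=
        of (tilde Γ) (fun r : TV Γ => G r.1.1) (v := ⟨(w, D), hq⟩) (gen w) with hy
      have hcomm : ∀ a ∈ (Finset.univ : Finset {C : Set V // IsCompOf Γ ((star Γ v)ᶜ) C}),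
          ∀ b ∈ Finset.univ, a ≠ b → Commute (x a) (x b) := by
        intro a _ b _ hab
        have hadj : (tilde Γ).Adj ⟨(v, a.1), a.2⟩ ⟨(v, b.1), b.2⟩ := by
          show _ ≠ _ ∧ _
          refine ⟨fun h => hab (Subtype.ext (congrArg (fun r : TV Γ => r.1.2) h)), ?_⟩
          rintro ⟨hne', -⟩
          exact hne' rfl
        exact of_commute (tilde Γ) (fun r : TV Γ => G r.1.1) hadj (gen v) (gen v)
      set c₀ : {C : Set V // IsCompOf Γ ((star Γ v)ᶜ) C} := ⟨C, hp⟩ with hc₀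
      have h2 : (Finset.univ.erase c₀).noncommProd x
          (fun _ hx' _ hy' hxy => hcomm _ (Finset.mem_of_mem_erase hx') _
            (Finset.mem_of_mem_erase hy') hxy) * x c₀ = pvert Γ G gen v :=
        Finset.noncommProd_erase_mul _ (Finset.mem_univ c₀) x hcomm
      have h1 : Commute y ((Finset.univ.erase c₀).noncommProd x
          (fun _ hx' _ hy' hxy => hcomm _ (Finset.mem_of_mem_erase hx') _
            (Finset.mem_of_mem_erase hy') hxy)) := by
        refine Finset.noncommProd_commute _ _ _ _ ?_
        intro c hc
        have hcne : c ≠ c₀ := Finset.ne_of_mem_erase hc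
        have hadj : (tilde Γ).Adj ⟨(v, c.1), c.2⟩ ⟨(w, D), hq⟩ := by
          show _ ≠ _ ∧ _
          refine ⟨fun h => hne ?_, ?_⟩
          · have h' := congrArg (fun r : TV Γ => r.1.1) h
            exact h'
          rintro ⟨-, -, -, hwc⟩
          exact hcne (Subtype.ext (IsCompOf.eq_of_mem c.2 hp hwc hwC))
        exact (of_commute (tilde Γ) (fun r : TV Γ => G r.1.1) hadj (gen v) (gen w)).symm
      -- in the quotient, `x c₀` is the inverse of the rest of the product
      have h3 : φ (x c₀) = (φ ((Finset.univ.erase c₀).noncommProd x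
          (fun _ hx' _ hy' hxy => hcomm _ (Finset.mem_of_mem_erase hx') _
            (Finset.mem_of_mem_erase hy') hxy)))⁻¹ := by
        have := congrArg φ h2
        rw [map_mul, hp1] at this
        exact (inv_eq_of_mul_eq_one_right this).symm
      show Commute (φ (x c₀)) (φ y)
      rw [h3]
      exact ((h1.map φ).symm.inv_left)
    · have hadj : (tilde Γ).Adj p q := show _ ≠ _ ∧ _ from ⟨hpq, hbad⟩
      exact (of_commute (tilde Γ) (fun r : TV Γ => G r.1.1) hadj _ _).map φ
  -- Step 2: the quotient is generated by the images of the vertex generators.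
  set S : Set (TildeProduct Γ G ⧸ f.range) :=
    {x | ∃ (p : TV Γ) (g : G p.1.1),
      x = φ (of (tilde Γ) (fun r : TV Γ => G r.1.1) (v := p) g)} with hS
  have hStop : Subgroup.closure S = ⊤ := by
    have h0 : S = φ '' {x : GraphProduct (tilde Γ) (fun r : TV Γ => G r.1.1) |
        ∃ (p : TV Γ) (g : G p.1.1), x = of (tilde Γ) (fun r : TV Γ => G r.1.1) g} := by
      ext z
      constructor
      · rintro ⟨p, g, rfl⟩; exact ⟨_, ⟨p, g, rfl⟩, rfl⟩
      · rintro ⟨_, ⟨p, g, rfl⟩, rfl⟩; exact ⟨p, g, rfl⟩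
    rw [h0, ← MonoidHom.map_closure, closure_of_eq_top]
    exact Subgroup.map_top_of_surjective _ (QuotientGroup.mk'_surjective _)
  -- Step 3: elements of S pairwise commute.
  have hScomm : ∀ s ∈ S, ∀ t ∈ S, Commute s t := by
    rintro s ⟨p, g, rfl⟩ t ⟨q, k, rfl⟩
    obtain ⟨n, hn⟩ : ∃ n : ℤ, gen p.1.1 ^ n = g := by
      have : g ∈ Subgroup.zpowers (gen p.1.1) := (hgen p.1.1).symm ▸ Subgroup.mem_top g
      exact Subgroup.mem_zpowers_iff.mp this
    obtain ⟨m, hm⟩ : ∃ m : ℤ, gen q.1.1 ^ m = k := by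
      have : k ∈ Subgroup.zpowers (gen q.1.1) := (hgen q.1.1).symm ▸ Subgroup.mem_top k
      exact Subgroup.mem_zpowers_iff.mp this
    rw [← hn, ← hm, map_zpow, map_zpow, map_zpow, map_zpow]
    exact (key p q).zpow_zpow n m
  -- Step 4: conclude.
  have hall : ∀ s ∈ S, ∀ t : TildeProduct Γ G ⧸ f.range, Commute s t := by
    intro s hs t
    have hle : Subgroup.closure S ≤ Subgroup.centralizer {s} := by
      rw [Subgroup.closure_le]
      intro u hu
      rw [SetLike.mem_coe, Subgroup.mem_centralizer_iff]
      rintro g hg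
      rw [Set.mem_singleton_iff] at hg
      subst hg
      exact hScomm g hs u hu
    have ht : t ∈ Subgroup.centralizer {s} := hle (hStop ▸ Subgroup.mem_top t)
    exact Subgroup.mem_centralizer_iff.mp ht s rfl
  intro a b
  have hle : Subgroup.closure S ≤ Subgroup.centralizer {b} := by
    rw [Subgroup.closure_le]
    intro u hu
    rw [SetLike.mem_coe, Subgroup.mem_centralizer_iff]
    rintro g hg
    rw [Set.mem_singleton_iff] at hg
    subst hg
    exact (hall u hu g).symm
  have ha : a ∈ Subgroup.centralizer {b} := hle (hStop ▸ Subgroup.mem_top a)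
  exact (Subgroup.mem_centralizer_iff.mp ha b rfl).symm

end ArXiv
end
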